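/- Let f : Cⁿ → C be entire with sup_{‖Re λ‖ ≤ k}(1+|λ|)^M |f(λ)| < ∞ for all M, k, let t > 0, and set φ_t(λ) = (πt)^{n/2} e^{tλ²} with λ² = Σλᵢ². Then h_t(λ) = ∫_{iRⁿ} f(x) φ_t(λ − x) dx converges absolutely for every λ ∈ Cⁿ, defines an entire function of λ, and for every M, k one has sup_{‖Re λ‖ ≤ k}(1+|λ|)^M |h_t(λ)| < ∞; that is, h_t ∈ PW(Cⁿ). -/

import Mathlib

open MeasureTheory

noncomputable section

def reOf {n : ℕ} (l : Fin n → ℂ) : Fin n → ℝ := fun i => (l i).re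

def qform {n : ℕ} (l : Fin n → ℂ) : ℂ := ∑ i, (l i) ^ 2

def iVec {n : ℕ} (x : Fin n → ℝ) : Fin n → ℂ := fun i => Complex.I * (x i : ℂ)

def gaussKer (n : ℕ) (t : ℝ) (l : Fin n → ℂ) : ℂ :=
  (((Real.pi * t) ^ ((n : ℝ) / 2) : ℝ) : ℂ) * Complex.exp ((t : ℂ) * qform l)

lemma norm_iVec {n : ℕ} (x : Fin n → ℝ) : ‖iVec x‖ = ‖x‖ := by
  have : ∀ i, ‖iVec x i‖₊ = ‖x i‖₊ := by
    intro i
    simp [iVec, nnnorm_mul]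
  simp only [Pi.norm_def, Pi.nnnorm_def]
  congr 1
  exact Finset.sup_congr rfl (fun i _ => this i)

lemma reOf_iVec {n : ℕ} (x : Fin n → ℝ) : reOf (iVec x) = 0 := by
  funext i
  simp [reOf, iVec]

lemma reOf_sub_iVec {n : ℕ} (l : Fin n → ℂ) (x : Fin n → ℝ) :
    reOf (l - iVec x) = reOf l := by
  funext i
  simp [reOf, iVec]

lemma continuous_iVec {n : ℕ} : Continuous (iVec (n := n)) := by
  unfold iVec; fun_prop

lemma continuous_qform {n : ℕ} : Continuous (qform (n := n)) := by
  unfold qform; fun_prop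

lemma continuous_gaussKer {n : ℕ} (t : ℝ) : Continuous (gaussKer n t) := by
  unfold gaussKer
  exact continuous_const.mul ((Complex.continuous_exp).comp (continuous_const.mul continuous_qform))

lemma norm_gaussKer {n : ℕ} {t : ℝ} (ht : 0 ≤ t) (l : Fin n → ℂ) :
    ‖gaussKer n t l‖ = (Real.pi * t) ^ ((n : ℝ) / 2) * Real.exp (t * (qform l).re) := by
  have h0 : (0:ℝ) ≤ (Real.pi * t) ^ ((n : ℝ) / 2) :=
    Real.rpow_nonneg (mul_nonneg Real.pi_pos.le ht) _
  rw [gaussKer, norm_mul, Complex.norm_real, Real.norm_of_nonneg h0, Complex.norm_exp]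
  congr 2
  simp [Complex.mul_re]

lemma norm_reOf_le {n : ℕ} (l : Fin n → ℂ) : ‖reOf l‖ ≤ ‖l‖ := by
  rw [pi_norm_le_iff_of_nonneg (norm_nonneg l)]
  intro i
  calc ‖reOf l i‖ = |(l i).re| := rfl
    _ ≤ ‖l i‖ := Complex.abs_re_le_norm (l i)
    _ ≤ ‖l‖ := norm_le_pi_norm l i

lemma gauss_decay {n N : ℕ} {t k : ℝ} (ht : 0 < t) (hk : 0 ≤ k) (μ : Fin n → ℂ)
    (hμ : ‖reOf μ‖ ≤ k) :
    (1 + ‖μ‖) ^ N * ‖gaussKer n t μ‖ ≤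
      (Real.pi * t) ^ ((n : ℝ) / 2) * Real.exp (t * n * k ^ 2 + N * k + N ^ 2 / (4 * t)) := by
  set s : ℝ := ‖(fun i => (μ i).im : Fin n → ℝ)‖ with hs_def
  have hs : 0 ≤ s := norm_nonneg _
  -- real part of qform
  have hre : (qform μ).re = ∑ i, ((μ i).re ^ 2 - (μ i).im ^ 2) := by
    rw [qform, Complex.re_sum]
    congr 1
    funext i
    simp [pow_two, Complex.mul_re]
  have hre_sum : ∑ i, (μ i).re ^ 2 ≤ n * k ^ 2 := by
    calc ∑ i, (μ i).re ^ 2 ≤ ∑ _i : Fin n, k ^ 2 := by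
          refine Finset.sum_le_sum (fun i _ => ?_)
          have h1 : |(μ i).re| ≤ k := by
            calc |(μ i).re| = ‖reOf μ i‖ := rfl
              _ ≤ ‖reOf μ‖ := norm_le_pi_norm _ i
              _ ≤ k := hμ
          calc (μ i).re ^ 2 = |(μ i).re| ^ 2 := (sq_abs _).symm
            _ ≤ k ^ 2 := by nlinarith [abs_nonneg ((μ i).re)]
      _ = n * k ^ 2 := by simp [Finset.sum_const, mul_comm]
  have him_sum : s ^ 2 ≤ ∑ i, (μ i).im ^ 2 := by
    have hsum : (0:ℝ) ≤ ∑ i, (μ i).im ^ 2 := Finset.sum_nonneg (fun i _ => sq_nonneg _)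
    have h : s ≤ Real.sqrt (∑ i, (μ i).im ^ 2) := by
      rw [hs_def, pi_norm_le_iff_of_nonneg (Real.sqrt_nonneg _)]
      intro i
      rw [Real.norm_eq_abs, ← Real.sqrt_sq_eq_abs]
      exact Real.sqrt_le_sqrt
        (Finset.single_le_sum (fun j _ => sq_nonneg ((μ j).im)) (Finset.mem_univ i))
    calc s ^ 2 ≤ Real.sqrt (∑ i, (μ i).im ^ 2) ^ 2 := by nlinarith [Real.sqrt_nonneg (∑ i, (μ i).im ^ 2)]
      _ = ∑ i, (μ i).im ^ 2 := Real.sq_sqrt hsum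
  have hqre : (qform μ).re ≤ n * k ^ 2 - s ^ 2 := by
    rw [hre, Finset.sum_sub_distrib]
    have := hre_sum
    have := him_sum
    linarith
  have hnorm_le : ‖μ‖ ≤ k + s := by
    rw [pi_norm_le_iff_of_nonneg (by linarith)]
    intro i
    calc ‖μ i‖ ≤ |(μ i).re| + |(μ i).im| := by
          exact Complex.norm_le_abs_re_add_abs_im (μ i)
      _ ≤ k + s := by
          have h1 : |(μ i).re| ≤ k := by
            calc |(μ i).re| = ‖reOf μ i‖ := rfl
              _ ≤ ‖reOf μ‖ := norm_le_pi_norm _ i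
              _ ≤ k := hμ
          have h2 : |(μ i).im| ≤ s := by
            simpa [Real.norm_eq_abs] using norm_le_pi_norm (fun j => (μ j).im) i
          linarith
  have hpow : (1 + ‖μ‖) ^ N ≤ Real.exp (N * (k + s)) := by
    calc (1 + ‖μ‖) ^ N ≤ Real.exp ‖μ‖ ^ N := by
          refine pow_le_pow_left₀ (by positivity) ?_ N
          rw [add_comm]
          exact Real.add_one_le_exp ‖μ‖
      _ = Real.exp (N * ‖μ‖) := by rw [← Real.exp_nat_mul]
      _ ≤ Real.exp (N * (k + s)) := by
          apply Real.exp_le_exp.2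
          exact mul_le_mul_of_nonneg_left hnorm_le (Nat.cast_nonneg N)
  have hc : (0:ℝ) ≤ (Real.pi * t) ^ ((n : ℝ) / 2) :=
    Real.rpow_nonneg (mul_nonneg Real.pi_pos.le ht.le) _
  rw [norm_gaussKer ht.le]
  calc (1 + ‖μ‖) ^ N * ((Real.pi * t) ^ ((n : ℝ) / 2) * Real.exp (t * (qform μ).re))
      ≤ Real.exp (N * (k + s)) * ((Real.pi * t) ^ ((n : ℝ) / 2) * Real.exp (t * (n * k ^ 2 - s ^ 2))) := by
        refine mul_le_mul hpow ?_ (by positivity) (by positivity)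
        refine mul_le_mul_of_nonneg_left ?_ hc
        exact Real.exp_le_exp.2 (mul_le_mul_of_nonneg_left hqre ht.le)
    _ = (Real.pi * t) ^ ((n : ℝ) / 2) * Real.exp (N * (k + s) + t * (n * k ^ 2 - s ^ 2)) := by
        rw [Real.exp_add]; ring
    _ ≤ (Real.pi * t) ^ ((n : ℝ) / 2) * Real.exp (t * n * k ^ 2 + N * k + N ^ 2 / (4 * t)) := by
        refine mul_le_mul_of_nonneg_left (Real.exp_le_exp.2 ?_) hc
        have key : (N:ℝ) * s - t * s ^ 2 ≤ N ^ 2 / (4 * t) := by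
          rw [le_div_iff₀ (by linarith : (0:ℝ) < 4 * t)]
          nlinarith [sq_nonneg ((N:ℝ) - 2 * t * s)]
        nlinarith [key]
def qd {n : ℕ} (l : Fin n → ℂ) : (Fin n → ℂ) →L[ℂ] ℂ :=
  ∑ i, ((2:ℂ) * l i) • ContinuousLinearMap.proj i

lemma hasFDerivAt_qform {n : ℕ} (l : Fin n → ℂ) : HasFDerivAt qform (qd l) l := by
  have h : ∀ i : Fin n, HasFDerivAt (fun l : Fin n → ℂ => (l i)^2)
      (((2:ℂ) * l i) • (ContinuousLinearMap.proj i : (Fin n → ℂ) →L[ℂ] ℂ)) l := by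
    intro i
    have hp : HasFDerivAt (fun l : Fin n → ℂ => l i)
        (ContinuousLinearMap.proj i : (Fin n → ℂ) →L[ℂ] ℂ) l :=
      (ContinuousLinearMap.proj i : (Fin n → ℂ) →L[ℂ] ℂ).hasFDerivAt
    have := hp.mul hp
    simp only [pow_two]
    refine this.congr_fderiv ?_
    ext v
    simp only [ContinuousLinearMap.smul_apply, ContinuousLinearMap.add_apply,
      ContinuousLinearMap.proj_apply, smul_eq_mul]
    ring
  have := HasFDerivAt.fun_sum (u := Finset.univ)
    (A := fun i (l : Fin n → ℂ) => (l i)^2)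
    (A' := fun i => ((2:ℂ) * l i) • (ContinuousLinearMap.proj i : (Fin n → ℂ) →L[ℂ] ℂ))
    (fun i _ => h i)
  exact this

lemma norm_proj_le {n : ℕ} (i : Fin n) :
    ‖(ContinuousLinearMap.proj i : (Fin n → ℂ) →L[ℂ] ℂ)‖ ≤ 1 := by
  refine ContinuousLinearMap.opNorm_le_bound _ zero_le_one (fun v => ?_)
  simpa using norm_le_pi_norm v i

lemma norm_qd_le {n : ℕ} (l : Fin n → ℂ) : ‖qd l‖ ≤ 2 * n * ‖l‖ := by
  calc ‖qd l‖ ≤ ∑ i : Fin n, ‖((2:ℂ) * l i) • (ContinuousLinearMap.proj i : (Fin n → ℂ) →L[ℂ] ℂ)‖ :=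
        norm_sum_le _ _
    _ ≤ ∑ _i : Fin n, 2 * ‖l‖ := by
        refine Finset.sum_le_sum (fun i _ => ?_)
        refine ContinuousLinearMap.opNorm_le_bound _ (by positivity) (fun v => ?_)
        simp only [ContinuousLinearMap.smul_apply, ContinuousLinearMap.proj_apply,
          smul_eq_mul, norm_mul, Complex.norm_ofNat]
        have h1 : ‖l i‖ ≤ ‖l‖ := norm_le_pi_norm l i
        have h2 : ‖v i‖ ≤ ‖v‖ := norm_le_pi_norm v i
        have := norm_nonneg (l i)
        have := norm_nonneg (v i)
        have := norm_nonneg l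
        nlinarith
    _ = 2 * n * ‖l‖ := by simp [Finset.sum_const]; ring

def gd (n : ℕ) (t : ℝ) (l : Fin n → ℂ) : (Fin n → ℂ) →L[ℂ] ℂ :=
  ((t : ℂ) * gaussKer n t l) • qd l

lemma hasFDerivAt_gaussKer {n : ℕ} (t : ℝ) (l : Fin n → ℂ) :
    HasFDerivAt (gaussKer n t) (gd n t l) l := by
  have h1 : HasFDerivAt (fun l : Fin n → ℂ => (t : ℂ) * qform l)
      ((t : ℂ) • qd l) l := (hasFDerivAt_qform l).const_mul _
  have h2 := h1.cexp
  have h3 := h2.const_mul ((((Real.pi * t) ^ ((n : ℝ) / 2) : ℝ) : ℂ))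
  refine (h3.congr_fderiv ?_ :)
  symm
  rw [gd, gaussKer]
  rw [smul_comm, smul_smul]
  rw [smul_smul]
  ring_nf

lemma integrable_inv_pow (n : ℕ) :
    Integrable (fun x : Fin n → ℝ => ((1 + ‖x‖) ^ (n + 1) : ℝ)⁻¹) := by
  have h := integrable_one_add_norm (E := Fin n → ℝ) (μ := volume)
    (r := (n : ℝ) + 1) (by rw [Module.finrank_fin_fun]; linarith)
  refine h.congr (Filter.Eventually.of_forall (fun x => ?_))
  simp only
  rw [Real.rpow_neg (by positivity : (0:ℝ) ≤ 1 + ‖x‖)]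
  congr 1
  rw [show ((n : ℝ) + 1) = ((n + 1 : ℕ) : ℝ) by push_cast; ring, Real.rpow_natCast]

lemma norm_gd_le {n : ℕ} {t : ℝ} (ht : 0 < t) (μ : Fin n → ℂ) :
    ‖gd n t μ‖ ≤
      t * ((Real.pi * t) ^ ((n : ℝ) / 2) * Real.exp (t * n * ‖reOf μ‖ ^ 2)) * (2 * n * ‖μ‖) := by
  have hg : ‖gaussKer n t μ‖ ≤
      (Real.pi * t) ^ ((n : ℝ) / 2) * Real.exp (t * n * ‖reOf μ‖ ^ 2) := by
    simpa using gauss_decay (N := 0) ht (norm_nonneg (reOf μ)) μ le_rfl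
  have hq := norm_qd_le μ
  rw [gd, norm_smul (α := ℂ) (β := (Fin n → ℂ) →L[ℂ] ℂ), norm_mul, Complex.norm_real,
    Real.norm_of_nonneg ht.le]
  have h1 : t * ‖gaussKer n t μ‖ ≤
      t * ((Real.pi * t) ^ ((n : ℝ) / 2) * Real.exp (t * n * ‖reOf μ‖ ^ 2)) :=
    mul_le_mul_of_nonneg_left hg ht.le
  exact mul_le_mul h1 hq (norm_nonneg _) (by positivity)

lemma continuous_qd {n : ℕ} : Continuous (fun μ : Fin n → ℂ => qd μ) := by
  unfold qd
  exact continuous_finset_sum _ (fun i _ =>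
    ((continuous_const.mul (continuous_apply i)).smul continuous_const))

lemma continuous_gd {n : ℕ} (t : ℝ) : Continuous (gd n t) := by
  unfold gd
  exact ((continuous_const.mul (continuous_gaussKer t)).smul continuous_qd)

def IsPW {n : ℕ} (f : (Fin n → ℂ) → ℂ) : Prop :=
  Differentiable ℂ f ∧ ∀ (N : ℕ) (k : ℝ), ∃ C : ℝ, ∀ l : Fin n → ℂ,
    ‖reOf l‖ ≤ k → (1 + ‖l‖) ^ N * ‖f l‖ ≤ C

/-- The Gaussian mollification `h_t(λ) = ∫_{iℝⁿ} f(x) φ_t(λ−x) dx` of a Paley–Wiener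
function converges absolutely, is entire in `λ`, and lies in `PW(ℂⁿ)`. -/
theorem gaussian_mollification_pw (n : ℕ) (f : (Fin n → ℂ) → ℂ) (hf : IsPW f)
    (t : ℝ) (ht : 0 < t) :
    (∀ l : Fin n → ℂ,
      Integrable (fun x : Fin n → ℝ => f (iVec x) * gaussKer n t (l - iVec x))) ∧
    Differentiable ℂ
      (fun l : Fin n → ℂ => ∫ x : Fin n → ℝ, f (iVec x) * gaussKer n t (l - iVec x)) ∧
    IsPW (fun l : Fin n → ℂ => ∫ x : Fin n → ℝ, f (iVec x) * gaussKer n t (l - iVec x)) := by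
  obtain ⟨hfd, hfb⟩ := hf
  have hfc : Continuous f := hfd.continuous
  have hc0 : (0:ℝ) ≤ (Real.pi * t) ^ ((n : ℝ) / 2) :=
    Real.rpow_nonneg (mul_nonneg Real.pi_pos.le ht.le) _
  -- polynomial decay of f on the imaginary axis
  have hdecay : ∀ N : ℕ, ∃ C : ℝ, 0 ≤ C ∧ ∀ x : Fin n → ℝ,
      ‖f (iVec x)‖ ≤ C * ((1 + ‖x‖) ^ N)⁻¹ := by
    intro N
    obtain ⟨C, hC⟩ := hfb N 0
    refine ⟨max C 0, le_max_right _ _, fun x => ?_⟩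
    have h := hC (iVec x) (by rw [reOf_iVec]; simp)
    rw [norm_iVec] at h
    have hpos : (0:ℝ) < (1 + ‖x‖) ^ N := by positivity
    rw [← div_eq_mul_inv, le_div_iff₀ hpos, mul_comm]
    exact h.trans (le_max_left _ _)
  -- continuity of the integrand in x
  have hmeas : ∀ l : Fin n → ℂ,
      Continuous (fun x : Fin n → ℝ => f (iVec x) * gaussKer n t (l - iVec x)) := by
    intro l
    exact (hfc.comp continuous_iVec).mul
      ((continuous_gaussKer t).comp (continuous_const.sub continuous_iVec))
  obtain ⟨C₁, hC₁0, hC₁⟩ := hdecay (n + 1)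
  -- Part 1 : integrability
  have part1 : ∀ l : Fin n → ℂ,
      Integrable (fun x : Fin n → ℝ => f (iVec x) * gaussKer n t (l - iVec x)) := by
    intro l
    set K : ℝ := C₁ * ((Real.pi * t) ^ ((n : ℝ) / 2) *
      Real.exp (t * n * ‖reOf l‖ ^ 2)) with hK
    refine Integrable.mono' (((integrable_inv_pow n).const_mul K).congr
      (Filter.Eventually.of_forall (fun x => rfl)))
      (hmeas l).aestronglyMeasurable
      (Filter.Eventually.of_forall (fun x => ?_))
    have hg : ‖gaussKer n t (l - iVec x)‖ ≤
        (Real.pi * t) ^ ((n : ℝ) / 2) * Real.exp (t * n * ‖reOf l‖ ^ 2) := by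
      simpa using gauss_decay (N := 0) ht (norm_nonneg (reOf l)) (l - iVec x)
        (le_of_eq (by rw [reOf_sub_iVec]))
    rw [norm_mul]
    calc ‖f (iVec x)‖ * ‖gaussKer n t (l - iVec x)‖
        ≤ (C₁ * ((1 + ‖x‖) ^ (n + 1))⁻¹) *
          ((Real.pi * t) ^ ((n : ℝ) / 2) * Real.exp (t * n * ‖reOf l‖ ^ 2)) :=
          mul_le_mul (hC₁ x) hg (norm_nonneg _) (by positivity)
      _ = K * ((1 + ‖x‖) ^ (n + 1))⁻¹ := by rw [hK]; ring
  -- Part 2 : differentiability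
  obtain ⟨C₂, hC₂0, hC₂⟩ := hdecay (n + 2)
  have part2 : ∀ l₀ : Fin n → ℂ, HasFDerivAt
      (fun l : Fin n → ℂ => ∫ x : Fin n → ℝ, f (iVec x) * gaussKer n t (l - iVec x))
      (∫ x : Fin n → ℝ, f (iVec x) • gd n t (l₀ - iVec x)) l₀ := by
    intro l₀
    set R : ℝ := ‖l₀‖ + 1 with hR
    have hR0 : (0:ℝ) ≤ R := by positivity
    set K : ℝ := C₂ * (t * ((Real.pi * t) ^ ((n : ℝ) / 2) * Real.exp (t * n * R ^ 2)) *
      (2 * n * ((R + 1)))) with hK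
    refine hasFDerivAt_integral_of_dominated_of_fderiv_le
      (F := fun l (x : Fin n → ℝ) => f (iVec x) * gaussKer n t (l - iVec x))
      (F' := fun l (x : Fin n → ℝ) => f (iVec x) • gd n t (l - iVec x))
      (bound := fun x : Fin n → ℝ => K * ((1 + ‖x‖) ^ (n + 1))⁻¹)
      (Metric.ball_mem_nhds l₀ one_pos)
      (Filter.Eventually.of_forall (fun l => (hmeas l).aestronglyMeasurable))
      (part1 l₀)
      (((hfc.comp continuous_iVec).smul
        ((continuous_gd t).comp (continuous_const.sub continuous_iVec))).aestronglyMeasurable)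
      (Filter.Eventually.of_forall (fun x => fun l hl => ?_))
      (((integrable_inv_pow n).const_mul K).congr
        (Filter.Eventually.of_forall (fun x => rfl)))
      (Filter.Eventually.of_forall (fun x => fun l hl => ?_))
    · -- the bound on the derivative
      have hlR : ‖l‖ ≤ R := by
        have := mem_ball_iff_norm.1 hl
        have h2 := norm_sub_norm_le l l₀
        rw [hR]; linarith
    
      have hre : ‖reOf (l - iVec x)‖ ≤ R := by
        rw [reOf_sub_iVec]
        exact (norm_reOf_le l).trans hlR
      have hmu : ‖l - iVec x‖ ≤ (R + 1) * (1 + ‖x‖) := by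
        have h1 : ‖l - iVec x‖ ≤ ‖l‖ + ‖iVec x‖ := norm_sub_le _ _
        rw [norm_iVec] at h1
        nlinarith [norm_nonneg x]
      have hgd : ‖gd n t (l - iVec x)‖ ≤
          t * ((Real.pi * t) ^ ((n : ℝ) / 2) * Real.exp (t * n * R ^ 2)) *
            (2 * n * ((R + 1) * (1 + ‖x‖))) := by
        refine (norm_gd_le ht (l - iVec x)).trans ?_
        have hre0 : (0:ℝ) ≤ ‖reOf (l - iVec x)‖ := norm_nonneg _
        gcongr
      rw [norm_smul (α := ℂ) (β := (Fin n → ℂ) →L[ℂ] ℂ)]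
      calc ‖f (iVec x)‖ * ‖gd n t (l - iVec x)‖
          ≤ (C₂ * ((1 + ‖x‖) ^ (n + 2))⁻¹) *
            (t * ((Real.pi * t) ^ ((n : ℝ) / 2) * Real.exp (t * n * R ^ 2)) *
              (2 * n * ((R + 1) * (1 + ‖x‖)))) :=
            mul_le_mul (hC₂ x) hgd (norm_nonneg _) (by positivity)
        _ = K * ((1 + ‖x‖) ^ (n + 1))⁻¹ := by
            rw [hK, pow_succ]
            have hX : (0:ℝ) < 1 + ‖x‖ := by positivity
            field_simp
    · -- differentiability of the integrand
      have h0 := (hasFDerivAt_gaussKer t (l - iVec x)).comp l (hasFDerivAt_sub_const (iVec x))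
      have h1 : HasFDerivAt (fun l : Fin n → ℂ => gaussKer n t (l - iVec x))
          (gd n t (l - iVec x)) l := by
        simpa [Function.comp_def] using h0
      exact h1.const_mul (f (iVec x))
  refine ⟨part1, fun l₀ => (part2 l₀).differentiableAt,
    fun l₀ => (part2 l₀).differentiableAt, ?_⟩
  intro N k
  set k' : ℝ := max k 0 with hk'def
  have hk'0 : (0:ℝ) ≤ k' := le_max_right _ _
  obtain ⟨C₃, hC₃0, hC₃⟩ := hdecay (N + (n + 1))
  set B : ℝ := (Real.pi * t) ^ ((n : ℝ) / 2) *
    Real.exp (t * n * k' ^ 2 + N * k' + N ^ 2 / (4 * t)) with hB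
  have hB0 : (0:ℝ) ≤ B := mul_nonneg hc0 (Real.exp_nonneg _)
  refine ⟨C₃ * B * ∫ x : Fin n → ℝ, ((1 + ‖x‖) ^ (n + 1) : ℝ)⁻¹, fun l hl => ?_⟩
  have hl' : ‖reOf l‖ ≤ k' := hl.trans (le_max_left _ _)
  have hpt : ∀ x : Fin n → ℝ,
      (1 + ‖l‖) ^ N * ‖f (iVec x) * gaussKer n t (l - iVec x)‖ ≤
        C₃ * B * ((1 + ‖x‖) ^ (n + 1))⁻¹ := by
    intro x
    have hsplit : (1 + ‖l‖) ^ N ≤ (1 + ‖x‖) ^ N * (1 + ‖l - iVec x‖) ^ N := by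
      rw [← mul_pow]
      refine pow_le_pow_left₀ (by positivity) ?_ N
      have h1 : ‖l‖ ≤ ‖l - iVec x‖ + ‖x‖ := by
        have := norm_sub_le l (iVec x)
        have h2 := norm_sub_norm_le l (iVec x)
        rw [norm_iVec] at h2
        linarith [abs_le.1 (le_refl |‖l‖ - ‖iVec x‖|)]
      nlinarith [norm_nonneg x, norm_nonneg (l - iVec x)]
    have hg : (1 + ‖l - iVec x‖) ^ N * ‖gaussKer n t (l - iVec x)‖ ≤ B :=
      gauss_decay ht hk'0 _ (by rw [reOf_sub_iVec]; exact hl')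
    have hfx : (1 + ‖x‖) ^ N * ‖f (iVec x)‖ ≤ C₃ * ((1 + ‖x‖) ^ (n + 1))⁻¹ := by
      calc (1 + ‖x‖) ^ N * ‖f (iVec x)‖
          ≤ (1 + ‖x‖) ^ N * (C₃ * ((1 + ‖x‖) ^ (N + (n + 1)))⁻¹) :=
            mul_le_mul_of_nonneg_left (hC₃ x) (by positivity)
        _ = C₃ * ((1 + ‖x‖) ^ (n + 1))⁻¹ := by
            rw [pow_add]
            have hX : (0:ℝ) < 1 + ‖x‖ := by positivity
            field_simp
    calc (1 + ‖l‖) ^ N * ‖f (iVec x) * gaussKer n t (l - iVec x)‖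
        = (1 + ‖l‖) ^ N * (‖f (iVec x)‖ * ‖gaussKer n t (l - iVec x)‖) := by rw [norm_mul]
      _ ≤ ((1 + ‖x‖) ^ N * (1 + ‖l - iVec x‖) ^ N) *
          (‖f (iVec x)‖ * ‖gaussKer n t (l - iVec x)‖) :=
          mul_le_mul_of_nonneg_right hsplit (by positivity)
      _ = ((1 + ‖x‖) ^ N * ‖f (iVec x)‖) *
          ((1 + ‖l - iVec x‖) ^ N * ‖gaussKer n t (l - iVec x)‖) := by ring
      _ ≤ (C₃ * ((1 + ‖x‖) ^ (n + 1))⁻¹) * B :=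
          mul_le_mul hfx hg (by positivity) (by positivity)
      _ = C₃ * B * ((1 + ‖x‖) ^ (n + 1))⁻¹ := by ring
  calc (1 + ‖l‖) ^ N * ‖∫ x : Fin n → ℝ, f (iVec x) * gaussKer n t (l - iVec x)‖
      ≤ (1 + ‖l‖) ^ N * ∫ x : Fin n → ℝ, ‖f (iVec x) * gaussKer n t (l - iVec x)‖ :=
        mul_le_mul_of_nonneg_left (norm_integral_le_integral_norm _) (by positivity)
    _ = ∫ x : Fin n → ℝ, (1 + ‖l‖) ^ N * ‖f (iVec x) * gaussKer n t (l - iVec x)‖ :=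
        (integral_const_mul _ _).symm
    _ ≤ ∫ x : Fin n → ℝ, C₃ * B * ((1 + ‖x‖) ^ (n + 1))⁻¹ :=
        integral_mono ((part1 l).norm.const_mul _)
          (((integrable_inv_pow n).const_mul (C₃ * B)).congr
            (Filter.Eventually.of_forall (fun x => rfl))) hpt
    _ = C₃ * B * ∫ x : Fin n → ℝ, ((1 + ‖x‖) ^ (n + 1) : ℝ)⁻¹ := integral_const_mul _ _
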